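/- arXiv:1302.6640 — 2 statements merged into one kernel-verified Lean document; each statement's English description precedes it below -/
import Mathlib

section
/- Let ν ∈ Λ with R_ν ≠ 0. Then the canonical ring homomorphism R_0 → End_{R_0}(R_ν), sending r ∈ R_0 to the endomorphism given by multiplication by r, is bijective; that is, every R_0-module endomorphism of R_ν is multiplication by a unique element of R_0. -/
/-!
STATEMENT 5: Let Λ be a submonoid of a finitely generated free abelian group G with
Λ ∩ (−Λ) = {0}, and let R = ⊕_{λ∈Λ} R_λ be a commutative Λ-graded domain, finitely
generated as a k-algebra, with R_μ · R_ν = R_{μ+ν} for all μ, ν ∈ Λ.  Assume the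
birationality hypothesis (every quotient a/b of two homogeneous elements of the same
degree equals a quotient c/d of elements of degree 0) and that R_0 is integrally closed
in its fraction field.  Then for ν ∈ Λ with R_ν ≠ 0, every R_0-module endomorphism of
R_ν is given by multiplication by a unique element of R_0 (the canonical map
R_0 → End_{R_0}(R_ν) is bijective).
-/

universe u

set_option maxHeartbeats 2000000 in
set_option synthInstance.maxHeartbeats 400000 in

theorem stmt5 (k : Type u) [Field k]
    (G : Type u) [AddCommGroup G] [DecidableEq G] [Module.Free ℤ G] [Module.Finite ℤ G]
    (Λ : AddSubmonoid G) (hΛ : ∀ g : G, g ∈ Λ → -g ∈ Λ → g = 0)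
    (R : Type u) [CommRing R] [IsDomain R] [Algebra k R] [Algebra.FiniteType k R]
    (𝒜 : ↥Λ → Submodule k R) [GradedAlgebra 𝒜]
    (hmul : ∀ μ ν : ↥Λ, 𝒜 μ * 𝒜 ν = 𝒜 (μ + ν))
    -- birationality: every ratio of homogeneous elements of equal degree is a ratio of
    -- degree-zero elements
    (hbir : ∀ (μ : ↥Λ) (a b : R), a ∈ 𝒜 μ → b ∈ 𝒜 μ → b ≠ 0 →
      ∃ c d : R, c ∈ 𝒜 0 ∧ d ∈ 𝒜 0 ∧ d ≠ 0 ∧ a * d = b * c)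
    -- R_0 is integrally closed in its fraction field
    (hIC : IsIntegrallyClosed ↥(𝒜 0))
    (ν : ↥Λ) (hν : 𝒜 ν ≠ ⊥) :
    ∀ f : ↥(𝒜 ν) → ↥(𝒜 ν),
      (∀ x y : ↥(𝒜 ν), f (x + y) = f x + f y) →
      (∀ (r : R), r ∈ 𝒜 0 → ∀ (x : ↥(𝒜 ν)) (h : r * ↑x ∈ 𝒜 ν),
        (↑(f ⟨r * ↑x, h⟩) : R) = r * ↑(f x)) →
      ∃ r₀ ∈ 𝒜 0, (∀ x : ↥(𝒜 ν), (↑(f x) : R) = r₀ * ↑x) ∧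
        ∀ r₁ ∈ 𝒜 0, (∀ x : ↥(𝒜 ν), (↑(f x) : R) = r₁ * ↑x) → r₁ = r₀ := by
  classical
  intro f hadd hsmul
  -- a nonzero element of degree ν
  obtain ⟨bb, hbmem, hbne⟩ := Submodule.ne_bot_iff _ |>.mp hν
  set b : ↥(𝒜 ν) := ⟨bb, hbmem⟩ with hbdef
  have hbne' : (b : R) ≠ 0 := hbne
  -- Step 1 : f x * b = x * f b for all x
  have key1 : ∀ x : ↥(𝒜 ν), (f x : R) * (b : R) = (x : R) * (f b : R) := by
    intro x
    obtain ⟨c, d, hc, hd, hdne, hxd⟩ := hbir ν x.1 b.1 x.2 b.2 hbne'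
    have hmem : d * x.1 ∈ 𝒜 ν := by
      have := SetLike.mul_mem_graded hd x.2; rwa [zero_add] at this
    have hmem2 : c * b.1 ∈ 𝒜 ν := by
      have := SetLike.mul_mem_graded hc b.2; rwa [zero_add] at this
    have h1 : (↑(f ⟨d * x.1, hmem⟩) : R) = d * ↑(f x) := hsmul d hd x hmem
    have h2 : (↑(f ⟨c * b.1, hmem2⟩) : R) = c * ↑(f b) := hsmul c hc b hmem2
    have heq : (⟨d * x.1, hmem⟩ : ↥(𝒜 ν)) = ⟨c * b.1, hmem2⟩ := by
      apply Subtype.ext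
      show d * x.1 = c * b.1
      rw [mul_comm d x.1, mul_comm c b.1]; exact hxd
    have h3 : d * (↑(f x) : R) = c * ↑(f b) := by rw [← h1, heq, h2]
    apply mul_left_cancel₀ hdne
    linear_combination (b : R) * h3 - (↑(f b) : R) * hxd
  -- Step 2 : write f b / b as a ratio of degree-0 elements
  obtain ⟨c', d', hc', hd', hd'ne, hbd⟩ := hbir ν (f b).1 b.1 (f b).2 b.2 hbne'
  -- Step 3 : d' * f x = c' * x for all x
  have key : ∀ x : ↥(𝒜 ν), d' * (↑(f x) : R) = c' * (x : R) := by
    intro x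
    apply mul_left_cancel₀ hbne'
    linear_combination d' * key1 x + (x : R) * hbd
  -- the module structure of M over ↥(𝒜 0)
  letI : SMul ↥(𝒜 0) ↥(𝒜 ν) :=
    ⟨fun a x => ⟨a.1 * x.1, by
      have := SetLike.mul_mem_graded a.2 x.2; rwa [zero_add] at this⟩⟩
  have smul_def : ∀ (a : ↥(𝒜 0)) (x : ↥(𝒜 ν)), ((a • x : ↥(𝒜 ν)) : R) = (a : R) * (x : R) :=
    fun _ _ => rfl
  letI : Module ↥(𝒜 0) ↥(𝒜 ν) :=
    { smul := (· • ·)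
      one_smul := fun x => Subtype.ext (one_mul x.1)
      mul_smul := fun a c x => Subtype.ext (mul_assoc a.1 c.1 x.1)
      smul_zero := fun a => Subtype.ext (mul_zero a.1)
      smul_add := fun a x y => Subtype.ext (mul_add a.1 x.1 y.1)
      add_smul := fun a c x => Subtype.ext (add_mul a.1 c.1 x.1)
      zero_smul := fun x => Subtype.ext (zero_mul x.1) }
  -- f as an ↥(𝒜 0)-linear endomorphism
  set F : Module.End ↥(𝒜 0) ↥(𝒜 ν) :=
    { toFun := f
      map_add' := hadd
      map_smul' := fun a x => Subtype.ext (hsmul a.1 a.2 x _) } with hF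
  -- M is a finitely generated ↥(𝒜 0)-module
  haveI : IsNoetherianRing R := Algebra.FiniteType.isNoetherianRing k R
  have hproj : ∀ (r s : R), s ∈ 𝒜 ν →
      ((DirectSum.decompose 𝒜 (r * s)) ν : R) = ((DirectSum.decompose 𝒜 r) 0 : R) * s := by
    letI : AddRightCancelMonoid ↥Λ :=
      { (inferInstance : AddCommMonoid ↥Λ) with
        add_right_cancel := fun a c e h => by
          apply Subtype.ext
          have := congrArg Subtype.val h
          exact add_right_cancel (a := c.1) (b := a.1) (c := e.1) this }
    intro r s hs
    have := DirectSum.coe_decompose_mul_add_of_right_mem 𝒜 (i := 0) (a := r) hs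
    rwa [zero_add] at this
  haveI hMfin : Module.Finite ↥(𝒜 0) ↥(𝒜 ν) := by
    obtain ⟨F0, hF0⟩ := IsNoetherian.noetherian (Ideal.span (𝒜 ν : Set R))
    have hx_mem_span : ∀ x ∈ F0, ∃ T : Finset R, ↑T ⊆ (𝒜 ν : Set R) ∧
        x ∈ Ideal.span (T : Set R) := by
      intro x hx
      have hx2 : x ∈ Ideal.span ((𝒜 ν : Set R)) := by
        rw [← hF0]
        exact Submodule.subset_span hx
      exact Submodule.mem_span_finite_of_mem_span hx2
    choose T hT1 hT2 using hx_mem_span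
    set S : Finset R := F0.attach.biUnion (fun x => T x.1 x.2) with hS
    have hSsub : (S : Set R) ⊆ (𝒜 ν : Set R) := by
      intro s hs
      rw [hS, Finset.coe_biUnion] at hs
      obtain ⟨x, -, hx2⟩ := Set.mem_iUnion₂.mp hs
      exact hT1 x.1 x.2 hx2
    have hspan : ∀ x : R, x ∈ 𝒜 ν → x ∈ Ideal.span (S : Set R) := by
      intro x hx
      have hxI : x ∈ Submodule.span R ((F0 : Finset R) : Set R) := by
        rw [hF0]
        exact Submodule.subset_span hx
      refine Submodule.span_le.mpr ?_ hxI
      intro y hy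
      have hy' : y ∈ F0 := hy
      have hTsub : T y hy' ⊆ S :=
        Finset.subset_biUnion_of_mem (fun x : {z // z ∈ F0} => T x.1 x.2)
          (Finset.mem_attach F0 ⟨y, hy'⟩)
      exact Ideal.span_mono (Finset.coe_subset.mpr hTsub) (hT2 y hy')
    constructor
    refine ⟨S.attach.image (fun s => (⟨s.1, hSsub s.2⟩ : ↥(𝒜 ν))), ?_⟩
    rw [eq_top_iff]
    rintro m -
    obtain ⟨g, -, hg⟩ := Submodule.mem_span_finset.mp (hspan m.1 m.2)
    have hm : (m : R) = ∑ s ∈ S, ((DirectSum.decompose 𝒜 (g s)) 0 : R) * s := by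
      have hπ : ∀ u v : R, ((DirectSum.decompose 𝒜 (u + v)) ν : R) =
          ((DirectSum.decompose 𝒜 u) ν : R) + ((DirectSum.decompose 𝒜 v) ν : R) := by
        intro u v
        rw [DirectSum.decompose_add, DirectSum.add_apply, Submodule.coe_add]
      let π : R →+ R := AddMonoidHom.mk' (fun r => ((DirectSum.decompose 𝒜 r) ν : R)) hπ
      have h1 : π (m : R) = (m : R) := DirectSum.decompose_of_mem_same 𝒜 m.2
      calc (m : R) = π (∑ s ∈ S, g s • s) := by rw [hg, h1]
        _ = ∑ s ∈ S, π (g s • s) := map_sum π _ _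
        _ = ∑ s ∈ S, ((DirectSum.decompose 𝒜 (g s)) 0 : R) * s := by
            refine Finset.sum_congr rfl fun s hs => ?_
            show ((DirectSum.decompose 𝒜 (g s * s)) ν : R) = _
            exact hproj (g s) s (hSsub hs)
    set m' : ↥(𝒜 ν) := ∑ s ∈ S.attach,
      (⟨((DirectSum.decompose 𝒜 (g s.1)) 0 : R), SetLike.coe_mem _⟩ : ↥(𝒜 0)) •
        (⟨s.1, hSsub s.2⟩ : ↥(𝒜 ν)) with hm'
    have hmm' : m = m' := by
      apply Subtype.ext
      rw [hm, hm']
      have : ((∑ s ∈ S.attach,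
          (⟨((DirectSum.decompose 𝒜 (g s.1)) 0 : R), SetLike.coe_mem _⟩ : ↥(𝒜 0)) •
            (⟨s.1, hSsub s.2⟩ : ↥(𝒜 ν)) : ↥(𝒜 ν)) : R) =
          ∑ s ∈ S.attach, ((DirectSum.decompose 𝒜 (g s.1)) 0 : R) * s.1 := by
        rw [AddSubmonoidClass.coe_finset_sum]
        exact Finset.sum_congr rfl fun s _ => rfl
      rw [this, Finset.sum_attach S (fun s => ((DirectSum.decompose 𝒜 (g s)) 0 : R) * s)]
    rw [hmm']
    apply Submodule.sum_mem
    intro s _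
    apply Submodule.smul_mem
    apply Submodule.subset_span
    exact Finset.mem_image_of_mem _ (Finset.mem_attach _ _)
  -- ↥(𝒜 0) is a domain
  set inc : ↥(𝒜 0) →+* R :=
    { toFun := Subtype.val
      map_one' := rfl
      map_mul' := fun _ _ => rfl
      map_zero' := rfl
      map_add' := fun _ _ => rfl } with hinc
  have hinc_inj : Function.Injective inc := Subtype.val_injective
  haveI : IsDomain ↥(𝒜 0) := hinc_inj.isDomain inc
  letI : Field (FractionRing ↥(𝒜 0)) := inferInstance
  -- the integral equation for F
  have hFint : IsIntegral ↥(𝒜 0) F := Algebra.IsIntegral.isIntegral F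
  obtain ⟨p, pmonic, hp0⟩ := hFint
  set n := p.natDegree with hn
  -- apply to b
  have happ : ∑ i ∈ Finset.range (n + 1), ((p.coeff i : ↥(𝒜 0)) : R) * (((F ^ i) b : ↥(𝒜 ν)) : R)
      = 0 := by
    have h1 : (Polynomial.aeval F p) b = 0 := by
      rw [Polynomial.aeval_def, hp0]; rfl
    rw [Polynomial.aeval_eq_sum_range] at h1
    have h2 : ((∑ i ∈ Finset.range (n + 1), p.coeff i • F ^ i) b) = (0 : ↥(𝒜 ν)) := h1
    rw [LinearMap.sum_apply] at h2
    have h3 := congrArg (Subtype.val) h2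
    rw [AddSubmonoidClass.coe_finset_sum] at h3
    simpa [smul_def] using h3
  -- iterates
  have hiter : ∀ i : ℕ, d' ^ i * (((F ^ i) b : ↥(𝒜 ν)) : R) = c' ^ i * (b : R) := by
    intro i
    induction i with
    | zero => simp
    | succ i ih =>
      have hFpow : (F ^ (i + 1)) b = F ((F ^ i) b) := by
        rw [pow_succ' F i]; rfl
      rw [hFpow]
      have hkey := key ((F ^ i) b)
      have hFeq : (F ((F ^ i) b) : R) = (f ((F ^ i) b) : R) := rfl
      rw [hFeq]
      calc d' ^ (i + 1) * (f ((F ^ i) b) : R)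
          = d' ^ i * (d' * (f ((F ^ i) b) : R)) := by ring
        _ = d' ^ i * (c' * (((F ^ i) b : ↥(𝒜 ν)) : R)) := by rw [hkey]
        _ = c' * (d' ^ i * (((F ^ i) b : ↥(𝒜 ν)) : R)) := by ring
        _ = c' * (c' ^ i * (b : R)) := by rw [ih]
        _ = c' ^ (i + 1) * (b : R) := by ring
  -- the R-level vanishing sum
  have hsumR : ∑ i ∈ Finset.range (n + 1), ((p.coeff i : ↥(𝒜 0)) : R) * c' ^ i * d' ^ (n - i)
      = 0 := by
    apply mul_right_cancel₀ hbne'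
    rw [zero_mul, Finset.sum_mul]
    have : ∀ i ∈ Finset.range (n + 1),
        ((p.coeff i : ↥(𝒜 0)) : R) * c' ^ i * d' ^ (n - i) * (b : R)
          = d' ^ n * (((p.coeff i : ↥(𝒜 0)) : R) * (((F ^ i) b : ↥(𝒜 ν)) : R)) := by
      intro i hi
      have hle : i ≤ n := Nat.lt_succ_iff.mp (Finset.mem_range.mp hi)
      have hd : d' ^ n = d' ^ (n - i) * d' ^ i := by
        rw [← pow_add, Nat.sub_add_cancel hle]
      calc ((p.coeff i : ↥(𝒜 0)) : R) * c' ^ i * d' ^ (n - i) * (b : R)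
          = ((p.coeff i : ↥(𝒜 0)) : R) * d' ^ (n - i) * (c' ^ i * (b : R)) := by ring
        _ = ((p.coeff i : ↥(𝒜 0)) : R) * d' ^ (n - i) * (d' ^ i * (((F ^ i) b : ↥(𝒜 ν)) : R)) := by
            rw [hiter i]
        _ = d' ^ n * (((p.coeff i : ↥(𝒜 0)) : R) * (((F ^ i) b : ↥(𝒜 ν)) : R)) := by
            rw [hd]; ring
    rw [Finset.sum_congr rfl this, ← Finset.mul_sum, happ, mul_zero]
  -- package the degree-zero data
  set cc : ↥(𝒜 0) := ⟨c', hc'⟩ with hcc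
  set dd : ↥(𝒜 0) := ⟨d', hd'⟩ with hdd
  have hddne : dd ≠ 0 := fun h => hd'ne (congrArg Subtype.val h)
  have hsumA0 : ∑ i ∈ Finset.range (n + 1), p.coeff i * cc ^ i * dd ^ (n - i) = (0 : ↥(𝒜 0)) := by
    apply hinc_inj
    rw [map_sum, map_zero]
    refine Eq.trans (Finset.sum_congr rfl fun i _ => ?_) hsumR
    rw [map_mul, map_mul, map_pow, map_pow]
    rfl
  -- pass to the fraction field of ↥(𝒜 0)
  have halg_inj : Function.Injective (algebraMap ↥(𝒜 0) (FractionRing ↥(𝒜 0))) :=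
    IsFractionRing.injective ↥(𝒜 0) (FractionRing ↥(𝒜 0))
  have hdK : algebraMap ↥(𝒜 0) (FractionRing ↥(𝒜 0)) dd ≠ 0 :=
    fun h => hddne (halg_inj (by rw [h, map_zero]))
  have hexists : ∃ y : ↥(𝒜 0), algebraMap ↥(𝒜 0) (FractionRing ↥(𝒜 0)) y =
      algebraMap ↥(𝒜 0) (FractionRing ↥(𝒜 0)) cc / algebraMap ↥(𝒜 0) (FractionRing ↥(𝒜 0)) dd := by
    refine IsIntegrallyClosed.isIntegral_iff.mp ⟨p, pmonic, ?_⟩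
    rw [Polynomial.eval₂_eq_sum_range]
    have hdnK : (algebraMap ↥(𝒜 0) (FractionRing ↥(𝒜 0)) dd) ^ n ≠ 0 := pow_ne_zero n hdK
    apply mul_left_cancel₀ hdnK
    rw [mul_zero, Finset.mul_sum]
    have hterm : ∀ i ∈ Finset.range (n + 1),
        (algebraMap ↥(𝒜 0) (FractionRing ↥(𝒜 0)) dd) ^ n * (algebraMap ↥(𝒜 0) (FractionRing ↥(𝒜 0)) (p.coeff i) *
          (algebraMap ↥(𝒜 0) (FractionRing ↥(𝒜 0)) cc / algebraMap ↥(𝒜 0) (FractionRing ↥(𝒜 0)) dd) ^ i)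
          = algebraMap ↥(𝒜 0) (FractionRing ↥(𝒜 0)) (p.coeff i * cc ^ i * dd ^ (n - i)) := by
      intro i hi
      have hle : i ≤ n := Nat.lt_succ_iff.mp (Finset.mem_range.mp hi)
      have hd : (algebraMap ↥(𝒜 0) (FractionRing ↥(𝒜 0)) dd) ^ n
          = (algebraMap ↥(𝒜 0) (FractionRing ↥(𝒜 0)) dd) ^ i * (algebraMap ↥(𝒜 0) (FractionRing ↥(𝒜 0)) dd) ^ (n - i) := by
        rw [← pow_add, Nat.add_sub_cancel' hle]
      rw [div_pow, hd, map_mul, map_mul, map_pow, map_pow]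
      field_simp
    rw [Finset.sum_congr rfl hterm, ← map_sum, hsumA0, map_zero]
  obtain ⟨e, he⟩ := hexists
  have hed : e * dd = cc := by
    apply halg_inj
    rw [map_mul, he, div_mul_cancel₀ _ hdK]
  have hedR : (e : R) * d' = c' := congrArg Subtype.val hed
  -- conclusion
  refine ⟨(e : R), e.2, ?_, ?_⟩
  · intro x
    apply mul_left_cancel₀ hd'ne
    rw [key x, ← hedR]; ring
  · intro r₁ hr₁ hx
    have h1 : r₁ * (b : R) = (e : R) * (b : R) := by
      rw [← hx b]
      apply mul_left_cancel₀ hd'ne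
      rw [key b, ← hedR]; ring
    exact mul_right_cancel₀ hbne' h1
end

section
/- Let ν ∈ Λ with R_ν ≠ 0 and let x ∈ R_ν be nonzero. Then there exists a nonzero y ∈ R_0 such that y·R_ν ⊆ x·R_0; that is, for every r ∈ R_ν there is r_0 ∈ R_0 with y·r = x·r_0. In particular R_ν is isomorphic as an R_0-module to a nonzero R_0-submodule of Frac(R_0), so R_ν is a torsion-free R_0-module of rank one. -/
/-!
STATEMENT 6: Let Λ be a submonoid of a finitely generated free abelian group G with
Λ ∩ (−Λ) = {0}, and let R = ⊕_{λ∈Λ} R_λ be a commutative Λ-graded domain, finitely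
generated as a k-algebra, with R_μ · R_ν = R_{μ+ν} for all μ, ν ∈ Λ.  Assume the
birationality hypothesis.  Let ν ∈ Λ with R_ν ≠ 0 and let x ∈ R_ν be nonzero.  Then
there exists a nonzero y ∈ R_0 with y·R_ν ⊆ x·R_0, i.e. for every r ∈ R_ν there is
r₀ ∈ R_0 with y·r = x·r₀.  (In particular R_ν is a torsion-free R_0-module of rank one,
being isomorphic to a nonzero R_0-submodule of Frac(R_0).)
-/

universe u

theorem stmt6 (k : Type u) [Field k]
    (G : Type u) [AddCommGroup G] [DecidableEq G] [Module.Free ℤ G] [Module.Finite ℤ G]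
    (Λ : AddSubmonoid G) (hΛ : ∀ g : G, g ∈ Λ → -g ∈ Λ → g = 0)
    (R : Type u) [CommRing R] [IsDomain R] [Algebra k R] [Algebra.FiniteType k R]
    (𝒜 : ↥Λ → Submodule k R) [GradedAlgebra 𝒜]
    (hmul : ∀ μ ν : ↥Λ, 𝒜 μ * 𝒜 ν = 𝒜 (μ + ν))
    -- birationality: every ratio of homogeneous elements of equal degree is a ratio of
    -- degree-zero elements
    (hbir : ∀ (μ : ↥Λ) (a b : R), a ∈ 𝒜 μ → b ∈ 𝒜 μ → b ≠ 0 →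
      ∃ c d : R, c ∈ 𝒜 0 ∧ d ∈ 𝒜 0 ∧ d ≠ 0 ∧ a * d = b * c)
    (ν : ↥Λ) (hν : 𝒜 ν ≠ ⊥)
    (x : R) (hx : x ∈ 𝒜 ν) (hx0 : x ≠ 0) :
    ∃ y ∈ 𝒜 0, y ≠ 0 ∧ ∀ r ∈ 𝒜 ν, ∃ r₀ ∈ 𝒜 0, y * r = x * r₀ := by
  classical
  letI lc : AddLeftCancelMonoid ↥Λ :=
    { (inferInstance : AddMonoid ↥Λ) with
      add_left_cancel := fun a b c h => by
        apply Subtype.ext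
        exact add_left_cancel (congrArg Subtype.val h : (a : G) + b = (a : G) + c) }
  -- Key: if x * s is homogeneous of degree ν, then s has degree 0.
  have key : ∀ s : R, x * s ∈ 𝒜 ν → s ∈ 𝒜 0 := by
    intro s hs
    have hzero : ∀ i : ↥Λ, i ≠ 0 → (DirectSum.decompose 𝒜 s i : R) = 0 := by
      intro i hi
      have h1 : (DirectSum.decompose 𝒜 (x * s) (ν + i) : R)
          = x * (DirectSum.decompose 𝒜 s i : R) :=
        DirectSum.coe_decompose_mul_add_of_left_mem (𝒜 := 𝒜) (b := s) hx
      have hne : ν ≠ ν + i := by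
        intro h
        apply hi
        apply Subtype.ext
        have h' : (ν : G) = (ν : G) + (i : G) := congrArg Subtype.val h
        have := left_eq_add.mp h'
        simpa using this
      have h2 : (DirectSum.decompose 𝒜 (x * s) (ν + i) : R) = 0 :=
        DirectSum.decompose_of_mem_ne 𝒜 hs hne
      rcases mul_eq_zero.mp (h1.symm.trans h2) with h | h
      · exact absurd h hx0
      · exact h
    rw [← DirectSum.sum_support_decompose 𝒜 s]
    refine Submodule.sum_mem _ fun i _ => ?_
    by_cases h0 : i = 0
    · subst h0; exact (DirectSum.decompose 𝒜 s 0).2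
    · rw [hzero i h0]; exact zero_mem _
  -- R is Noetherian
  haveI : IsNoetherianRing R := Algebra.FiniteType.isNoetherianRing k R
  have hfg : (Ideal.span ((𝒜 ν : Set R))).FG := IsNoetherian.noetherian _
  obtain ⟨S, hS⟩ := hfg
  -- extract a finite generating set U inside 𝒜 ν
  have hTex : ∀ s ∈ (S : Set R), ∃ T : Finset R,
      ↑T ⊆ ((𝒜 ν : Submodule k R) : Set R) ∧ s ∈ Submodule.span R (↑T : Set R) := by
    intro s hsS
    have hs1 : s ∈ Ideal.span ((↑S : Set R)) := Submodule.subset_span hsS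
    rw [hS] at hs1
    exact Submodule.mem_span_finite_of_mem_span hs1
  choose T hT1 hT2 using hTex
  set U : Finset R := S.attach.biUnion
    (fun s => T s.1 (Finset.mem_coe.mpr s.2)) with hUdef
  have hU1 : ∀ t ∈ U, t ∈ 𝒜 ν := by
    intro t ht
    rw [hUdef, Finset.mem_biUnion] at ht
    obtain ⟨s, _, hts⟩ := ht
    exact hT1 _ _ (Finset.mem_coe.mpr hts)
  have hU2 : ∀ r ∈ 𝒜 ν, r ∈ Submodule.span R (↑U : Set R) := by
    intro r hr
    have h1 : r ∈ Ideal.span ((↑S : Set R)) := by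
      rw [hS]; exact Submodule.subset_span hr
    have h2 : Ideal.span ((↑S : Set R)) ≤ Submodule.span R (↑U : Set R) := by
      rw [Ideal.span_le]
      intro s hsS
      have hsS' : s ∈ (S : Set R) := hsS
      refine Submodule.span_mono ?_ (hT2 s hsS')
      intro t ht
      refine Finset.mem_coe.mpr ?_
      rw [hUdef, Finset.mem_biUnion]
      exact ⟨⟨s, Finset.mem_coe.mp hsS'⟩, Finset.mem_attach _ _, Finset.mem_coe.mp ht⟩
    exact h2 h1
  -- choose numerators and denominators
  have hcd : ∀ t : R, ∃ c d : R, c ∈ 𝒜 0 ∧ d ∈ 𝒜 0 ∧ d ≠ 0 ∧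
      (t ∈ 𝒜 ν → t * d = x * c) := by
    intro t
    by_cases ht : t ∈ 𝒜 ν
    · obtain ⟨c, d, hc, hd, hd0, he⟩ := hbir ν t x ht hx hx0
      exact ⟨c, d, hc, hd, hd0, fun _ => he⟩
    · exact ⟨0, 1, zero_mem _, SetLike.one_mem_graded 𝒜, one_ne_zero,
        fun h => absurd h ht⟩
  choose c d hc hd hd0 he using hcd
  have hy0 : (∏ t ∈ U, d t) ∈ 𝒜 0 := by
    refine Finset.prod_induction d (· ∈ 𝒜 0) (fun a b ha hb => ?_)
      (SetLike.one_mem_graded 𝒜) (fun t _ => hd t)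
    have := SetLike.mul_mem_graded ha hb
    simpa using this
  refine ⟨∏ t ∈ U, d t, hy0, Finset.prod_ne_zero_iff.mpr fun t _ => hd0 t, ?_⟩
  intro r hr
  set y : R := ∏ t ∈ U, d t with hy
  obtain ⟨f, -, hf⟩ := Submodule.mem_span_finset.mp (hU2 r hr)
  have hdvd : x ∣ y * r := by
    rw [← hf, Finset.mul_sum]
    refine Finset.dvd_sum fun t ht => ?_
    have het := he t (hU1 t ht)
    have hyt : y * t = x * ((∏ j ∈ U.erase t, d j) * c t) := by
      rw [hy, ← Finset.mul_prod_erase U d ht]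
      calc (d t * ∏ j ∈ U.erase t, d j) * t
          = (t * d t) * ∏ j ∈ U.erase t, d j := by ring
        _ = (x * c t) * ∏ j ∈ U.erase t, d j := by rw [het]
        _ = x * ((∏ j ∈ U.erase t, d j) * c t) := by ring
    have hdt : x ∣ y * t := ⟨_, hyt⟩
    rw [smul_eq_mul, mul_left_comm]
    exact hdt.mul_left (f t)
  obtain ⟨s, hs⟩ := hdvd
  have hys : y * r ∈ 𝒜 ν := by
    have := SetLike.mul_mem_graded hy0 hr
    simpa using this
  exact ⟨s, key s (hs ▸ hys), hs⟩
end
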